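/- Let U be a real Banach space and V a real normed space, and let a : U × V → ℝ be a semilinear form that is Lipschitz continuous with constant C_a > 0 and satisfies the nonlinear inf-sup condition with constant M_a > 0. Then the range of the operator A : U → V′, A(w) = a(w; ·), i.e. the set {a(w; ·) : w ∈ U}, is a closed subset of V′. -/

import Mathlib

/-- **Closed range.** Let `U` be a real Banach space, `V` a real normed space, and
`a : U → V →L[ℝ] ℝ` a semilinear form that is Lipschitz continuous with constant
`Ca > 0` and satisfies the nonlinear inf-sup condition with constant `Ma > 0`.
Then the range of the operator `A : U → V′`, `A w = a w`, is a closed subset of `V′`. -/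
theorem nonlinear_infSup_closed_range
    {U V : Type*}
    [NormedAddCommGroup U] [NormedSpace ℝ U] [CompleteSpace U]
    [NormedAddCommGroup V] [NormedSpace ℝ V]
    (a : U → V →L[ℝ] ℝ) (Ca Ma : ℝ) (hCa : 0 < Ca) (hMa : 0 < Ma)
    (hLip : ∀ w₁ w₂ : U, ∀ v : V, a w₁ v - a w₂ v ≤ Ca * ‖w₁ - w₂‖ * ‖v‖)
    (hinfsup : ∀ w₁ w₂ : U, w₁ ≠ w₂ → ∀ c : ℝ, c < Ma →
      ∃ v : V, v ≠ 0 ∧ c < (a w₁ v - a w₂ v) / (‖w₁ - w₂‖ * ‖v‖)) :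
    IsClosed (Set.range a) := by
  -- Key lower bound: Ma * ‖w₁ - w₂‖ ≤ ‖a w₁ - a w₂‖
  have key : ∀ w₁ w₂ : U, Ma * ‖w₁ - w₂‖ ≤ ‖a w₁ - a w₂‖ := by
    intro w₁ w₂
    rcases eq_or_ne w₁ w₂ with h | h
    · simp [h]
    · have hnorm : 0 < ‖w₁ - w₂‖ := by
        simpa [norm_pos_iff, sub_ne_zero] using h
      rw [← le_div_iff₀ hnorm]
      refine le_of_forall_lt fun c hc => ?_
      obtain ⟨v, hv, hcv⟩ := hinfsup w₁ w₂ h c hc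
      have hvnorm : 0 < ‖v‖ := norm_pos_iff.mpr hv
      calc c < (a w₁ v - a w₂ v) / (‖w₁ - w₂‖ * ‖v‖) := hcv
        _ ≤ (‖a w₁ - a w₂‖ * ‖v‖) / (‖w₁ - w₂‖ * ‖v‖) := by
            apply div_le_div_of_nonneg_right ?_ (by positivity) |>.trans_eq rfl
            calc a w₁ v - a w₂ v = (a w₁ - a w₂) v := by simp
              _ ≤ ‖(a w₁ - a w₂) v‖ := Real.le_norm_self _
              _ ≤ ‖a w₁ - a w₂‖ * ‖v‖ := (a w₁ - a w₂).le_opNorm v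
        _ = ‖a w₁ - a w₂‖ / ‖w₁ - w₂‖ := by
            field_simp
  have anti : AntilipschitzWith (Ma⁻¹).toNNReal a := by
    apply AntilipschitzWith.of_le_mul_dist
    intro x y
    have := key x y
    rw [dist_eq_norm, dist_eq_norm]
    rw [Real.coe_toNNReal _ (by positivity)]
    rw [← mul_le_mul_iff_right₀ hMa, ← mul_assoc, mul_inv_cancel₀ hMa.ne', one_mul]
    exact this
  have lip : LipschitzWith Ca.toNNReal a := by
    apply LipschitzWith.of_dist_le_mul
    intro x y
    rw [dist_eq_norm, dist_eq_norm, Real.coe_toNNReal _ hCa.le]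
    apply ContinuousLinearMap.opNorm_le_bound _ (by positivity)
    intro v
    have h1 := hLip x y v
    have h2 := hLip y x v
    rw [norm_sub_rev y x] at h2
    simp only [ContinuousLinearMap.sub_apply]
    rw [Real.norm_eq_abs, abs_le]
    constructor
    · linarith
    · linarith
  exact anti.isClosed_range lip.uniformContinuous
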